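/- Suppose G is a strong k-chromatic-choosable graph with n vertices and m edges that does not satisfy the edge condition, and let d = m − n(k−2) > 0. If p is a positive integer with d ≤ p(2k+p−3)/2, then G ∨ K_p is a strong (k+p)-chromatic-choosable graph that satisfies the edge condition, i.e., m + p(p−1)/2 + np ≤ (n+p)(k+p−2). -/

import Mathlib

open SimpleGraph Finset

section ListColoringDefs

variable {V : Type*}

/-- `f` is a proper coloring of `G` choosing each color from the list `L v`. -/
def IsProperListColoring (G : SimpleGraph V) (L : V → Finset ℕ) (f : V → ℕ) : Prop :=
  (∀ v, f v ∈ L v) ∧ ∀ u v, G.Adj u v → f u ≠ f v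

/-- `G` admits a proper coloring from the list assignment `L`. -/
def ListColorable (G : SimpleGraph V) (L : V → Finset ℕ) : Prop :=
  ∃ f, IsProperListColoring G L f

/-- `G` is colorable from every list assignment with lists of size at least `m`. -/
def Choosable (G : SimpleGraph V) (m : ℕ) : Prop :=
  ∀ L : V → Finset ℕ, (∀ v, m ≤ (L v).card) → ListColorable G L

/-- The list chromatic number of `G`. -/
noncomputable def listChromaticNumber (G : SimpleGraph V) : ℕ :=
  sInf { m | Choosable G m }

/-- `G` is strong `k`-chromatic-choosable: `χ(G) = k` and every `(k-1)`-assignment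
from which `G` is not colorable is constant. -/
def StrongCC (G : SimpleGraph V) (k : ℕ) : Prop :=
  G.chromaticNumber = (k : ℕ∞) ∧
    ∀ L : V → Finset ℕ, (∀ v, (L v).card = k - 1) → ¬ ListColorable G L →
      ∀ u v : V, L u = L v

/-- The number of proper `L`-colorings of `G`. -/
noncomputable def numColorings (G : SimpleGraph V) (L : V → Finset ℕ) : ℕ :=
  Set.ncard { f : V → ℕ | IsProperListColoring G L f }

/-- The list color function `P_ℓ(G,k)`: the minimum number of proper `L`-colorings
over all `k`-assignments `L`. -/
noncomputable def listColorFunction (G : SimpleGraph V) (k : ℕ) : ℕ :=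
  sInf { n | ∃ L : V → Finset ℕ, (∀ v, (L v).card = k) ∧ n = numColorings G L }

/-- The chromatic polynomial `P(G,k)`: the number of proper colorings with colors
from `{0, …, k-1}`. -/
noncomputable def chromPoly (G : SimpleGraph V) (k : ℕ) : ℕ :=
  numColorings G (fun _ => Finset.range k)

/-- The join `G ∨ K_p` of `G` with the complete graph on `p` vertices. -/
def joinK (G : SimpleGraph V) (p : ℕ) : SimpleGraph (V ⊕ Fin p) :=
  SimpleGraph.fromRel (fun a b =>
    match a, b with
    | Sum.inl u, Sum.inl v => G.Adj u v
    | _, _ => True)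

/-- The star `K_{1,s}`: center `none` adjacent to the `s` leaves. -/
def starGraph (s : ℕ) : SimpleGraph (Option (Fin s)) :=
  SimpleGraph.fromRel (fun a _ => a = none)

/-- The cycle graph `C_n` on `Fin n` (for `n ≥ 3`). -/
def cycGraph (n : ℕ) : SimpleGraph (Fin n) :=
  SimpleGraph.fromRel (fun a b => b.val = (a.val + 1) % n)

end ListColoringDefs


section StmtNineAux
variable {V : Type*}

lemma joinK_adj_inl_inl (G : SimpleGraph V) (p : ℕ) (u v : V) :
    (joinK G p).Adj (Sum.inl u) (Sum.inl v) ↔ G.Adj u v := by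
  simp only [joinK, SimpleGraph.fromRel_adj]
  constructor
  · rintro ⟨hne, h | h⟩
    · exact h
    · exact h.symm
  · intro hadj
    exact ⟨by simpa using hadj.ne, Or.inl hadj⟩

lemma joinK_adj_inl_inr (G : SimpleGraph V) (p : ℕ) (u : V) (i : Fin p) :
    (joinK G p).Adj (Sum.inl u) (Sum.inr i) := by
  simp [joinK, SimpleGraph.fromRel_adj]

lemma joinK_adj_inr_inr (G : SimpleGraph V) (p : ℕ) (i j : Fin p) :
    (joinK G p).Adj (Sum.inr i) (Sum.inr j) ↔ i ≠ j := by
  simp [joinK, SimpleGraph.fromRel_adj]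

/-- Chromatic number of the join is χ(G) + p. -/
lemma chromatic_joinK [Fintype V] (G : SimpleGraph V) (k p : ℕ)
    (hχ : G.chromaticNumber = (k : ℕ∞)) :
    (joinK G p).chromaticNumber = ((k + p : ℕ) : ℕ∞) := by
  classical
  have hGk : G.Colorable k := by
    have h1 := G.colorable_chromaticNumber_of_fintype
    rwa [hχ, ENat.toNat_coe] at h1
  obtain ⟨C⟩ := hGk
  -- upper bound
  have hupper : (joinK G p).Colorable (k + p) := by
    refine ⟨SimpleGraph.Coloring.mk
      (Sum.elim (fun v => Fin.castLE (Nat.le_add_right k p) (C v))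
        (fun i => ⟨k + i.val, by omega⟩)) ?_⟩
    rintro (u | i) (v | j) hadj
    · intro hc
      exact C.valid ((joinK_adj_inl_inl G p u v).mp hadj)
        (Fin.castLE_injective (Nat.le_add_right k p) (by simpa using hc))
    · intro hc
      have := congrArg Fin.val hc
      have h2 := (C u).isLt
      simp only [Sum.elim_inl, Sum.elim_inr, Fin.coe_castLE] at this
      omega
    · intro hc
      have := congrArg Fin.val hc
      have h2 := (C v).isLt
      simp only [Sum.elim_inl, Sum.elim_inr, Fin.coe_castLE] at this
      omega
    · have hij : i ≠ j := (joinK_adj_inr_inr G p i j).mp hadj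
      intro hc
      have := congrArg Fin.val hc
      simp only [Sum.elim_inr] at this
      exact hij (Fin.ext (by omega))
  -- lower bound
  have hlower : ∀ c : ℕ, (joinK G p).Colorable c → k + p ≤ c := by
    intro c ⟨g⟩
    set S : Finset (Fin c) := Finset.image (fun i => g (Sum.inr i)) Finset.univ with hS
    have hginj : Function.Injective (fun i : Fin p => g (Sum.inr i)) := by
      intro i j hij
      by_contra hne
      exact g.valid ((joinK_adj_inr_inr G p i j).mpr hne) hij
    have hScard : S.card = p := by
      rw [hS, Finset.card_image_of_injective _ hginj, Finset.card_univ, Fintype.card_fin]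
    have hpc : p ≤ c := by
      have := Finset.card_le_univ S
      simp only [hScard, Finset.card_univ, Fintype.card_fin] at this
      exact this
    have hnotin : ∀ v, g (Sum.inl v) ∉ S := by
      intro v hv
      obtain ⟨i, -, hi⟩ := Finset.mem_image.mp hv
      exact g.valid (joinK_adj_inl_inr G p v i) hi.symm
    have hcardc : Fintype.card ↥(Finset.univ \ S) = c - p := by
      rw [Fintype.card_coe, Finset.card_sdiff_of_subset (Finset.subset_univ S), Finset.card_univ,
        Fintype.card_fin, hScard]
    have hGcol : G.Colorable (c - p) := by
      refine ⟨SimpleGraph.Coloring.mk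
        (fun v => (Fintype.equivFinOfCardEq hcardc)
          ⟨g (Sum.inl v), Finset.mem_sdiff.mpr ⟨Finset.mem_univ _, hnotin v⟩⟩) ?_⟩
      intro u v hadj hc
      have h1 := g.valid ((joinK_adj_inl_inl G p u v).mpr hadj)
      have h2 := (Fintype.equivFinOfCardEq hcardc).injective hc
      exact h1 (congrArg Subtype.val h2)
    have := hGcol.chromaticNumber_le
    rw [hχ, Nat.cast_le] at this
    omega
  refine le_antisymm hupper.chromaticNumber_le ?_
  have hne : (joinK G p).chromaticNumber ≠ ⊤ :=
    ne_top_of_le_ne_top (WithTop.coe_ne_top) hupper.chromaticNumber_le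
  have hcol := (joinK G p).colorable_chromaticNumber_of_fintype
  have hle := hlower _ hcol
  calc ((k + p : ℕ) : ℕ∞) ≤ (((joinK G p).chromaticNumber.toNat : ℕ) : ℕ∞) :=
        Nat.cast_le.mpr hle
    _ = (joinK G p).chromaticNumber := ENat.coe_toNat hne

lemma listColorable_mono (G : SimpleGraph V) {L M : V → Finset ℕ} (h : ∀ v, L v ⊆ M v)
    (hc : ListColorable G L) : ListColorable G M := by
  obtain ⟨f, hf1, hf2⟩ := hc
  exact ⟨f, fun v => h v (hf1 v), hf2⟩

/-- Lemma A: a strong k-CC graph on ≥ 2 vertices is colorable from any assignment with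
all lists of size ≥ k-1 and some list of size ≥ k. -/
lemma lemmaA (G : SimpleGraph V) (k : ℕ) (hk : 2 ≤ k) (h : StrongCC G k)
    (hnt : Nontrivial V) (M : V → Finset ℕ) (hM : ∀ v, k - 1 ≤ (M v).card)
    (v₀ : V) (hv₀ : k ≤ (M v₀).card) : ListColorable G M := by
  classical
  by_contra hnc
  -- any (k-1)-truncation of M is non-colorable, hence constant
  have key : ∀ T : V → Finset ℕ, (∀ v, T v ⊆ M v) → (∀ v, (T v).card = k - 1) →
      ∀ u v, T u = T v := by
    intro T hsub hcard
    refine h.2 T hcard ?_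
    intro hc
    exact hnc (listColorable_mono G hsub hc)
  choose T hTsub hTcard using fun v => Finset.exists_subset_card_eq (hM v)
  have hTconst := key T hTsub hTcard
  -- pick x ∈ M v₀ \ T v₀
  have hne : ¬ M v₀ ⊆ T v₀ := by
    intro hs
    have := Finset.card_le_card hs
    rw [hTcard v₀] at this
    omega
  obtain ⟨x, hxM, hxT⟩ := Finset.not_subset.mp hne
  have hTne : (T v₀).Nonempty := by
    rw [← Finset.card_pos, hTcard v₀]; omega
  obtain ⟨y, hy⟩ := hTne
  set T' : V → Finset ℕ := Function.update T v₀ (insert x ((T v₀).erase y)) with hT'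
  have hT'v₀ : T' v₀ = insert x ((T v₀).erase y) := Function.update_self _ _ _
  have hxe : x ∉ (T v₀).erase y := fun hc => hxT (Finset.mem_of_mem_erase hc)
  have hT'sub : ∀ v, T' v ⊆ M v := by
    intro v
    by_cases hv : v = v₀
    · subst hv
      rw [hT'v₀]
      intro z hz
      rcases Finset.mem_insert.mp hz with rfl | hz
      · exact hxM
      · exact hTsub v (Finset.mem_of_mem_erase hz)
    · rw [hT', Function.update_of_ne hv]; exact hTsub v
  have hT'card : ∀ v, (T' v).card = k - 1 := by
    intro v
    by_cases hv : v = v₀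
    · subst hv
      rw [hT'v₀, Finset.card_insert_of_notMem hxe, Finset.card_erase_of_mem hy, hTcard v]
      omega
    · rw [hT', Function.update_of_ne hv]; exact hTcard v
  have hT'const := key T' hT'sub hT'card
  obtain ⟨u, hu⟩ := exists_ne v₀
  have h1 : T' u = T u := by rw [hT', Function.update_of_ne hu]
  have : T v₀ = insert x ((T v₀).erase y) := by
    calc T v₀ = T u := (hTconst u v₀).symm
    _ = T' u := h1.symm
    _ = T' v₀ := hT'const u v₀
    _ = _ := hT'v₀
  exact hxT (this ▸ Finset.mem_insert_self x _)

/-- SDR through a prescribed element, via Hall's theorem. -/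
lemma sdr {p : ℕ} (S : Fin p → Finset ℕ) (hS : ∀ j, p ≤ (S j).card)
    (i : Fin p) (x : ℕ) (hx : x ∈ S i) :
    ∃ c : Fin p → ℕ, Function.Injective c ∧ (∀ j, c j ∈ S j) ∧ c i = x := by
  classical
  set t : Fin p → Finset ℕ := fun j => if j = i then {x} else (S j).erase x with ht
  have hall : ∀ s : Finset (Fin p), s.card ≤ (s.biUnion t).card := by
    intro s
    by_cases his : i ∈ s
    · by_cases hs1 : ∃ j ∈ s, j ≠ i
      · obtain ⟨j, hjs, hji⟩ := hs1
        have h1 : insert x ((S j).erase x) ⊆ s.biUnion t := by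
          intro z hz
          rcases Finset.mem_insert.mp hz with rfl | hz
          · exact Finset.mem_biUnion.mpr ⟨i, his, by simp [ht]⟩
          · exact Finset.mem_biUnion.mpr ⟨j, hjs, by simp [ht, hji, hz]⟩
        have h2 : p ≤ (insert x ((S j).erase x)).card := by
          rw [Finset.card_insert_of_notMem (Finset.notMem_erase x _)]
          have := Finset.card_erase_of_mem (a := x) (s := S j)
          have h3 : (S j).card - 1 ≤ ((S j).erase x).card := by
            by_cases hxj : x ∈ S j
            · rw [Finset.card_erase_of_mem hxj]
            · rw [Finset.erase_eq_of_notMem hxj]; omega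
          have := hS j
          omega
        calc s.card ≤ Fintype.card (Fin p) := Finset.card_le_univ s
          _ = p := Fintype.card_fin p
          _ ≤ _ := le_trans h2 (Finset.card_le_card h1)
      · push_neg at hs1
        have : s = {i} := by
          apply Finset.eq_singleton_iff_unique_mem.mpr
          exact ⟨his, fun j hj => hs1 j hj⟩
        subst this
        simp [ht]
    · rcases Finset.eq_empty_or_nonempty s with rfl | ⟨j, hjs⟩
      · simp
      · have hji : j ≠ i := fun hc => his (hc ▸ hjs)
        have h1 : (S j).erase x ⊆ s.biUnion t := by
          intro z hz
          exact Finset.mem_biUnion.mpr ⟨j, hjs, by simp [ht, hji, hz]⟩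
        have h2 : s.card ≤ p - 1 := by
          have : s ⊆ Finset.univ.erase i := by
            intro z hz
            exact Finset.mem_erase.mpr ⟨fun hc => his (hc ▸ hz), Finset.mem_univ z⟩
          have := Finset.card_le_card this
          rw [Finset.card_erase_of_mem (Finset.mem_univ i), Finset.card_univ,
            Fintype.card_fin] at this
          omega
        have h3 : (S j).card - 1 ≤ ((S j).erase x).card := by
          by_cases hxj : x ∈ S j
          · rw [Finset.card_erase_of_mem hxj]
          · rw [Finset.erase_eq_of_notMem hxj]; omega
        have := hS j
        have := Finset.card_le_card h1
        omega
  obtain ⟨c, hcinj, hcmem⟩ := (Finset.all_card_le_biUnion_card_iff_exists_injective t).mp hall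
  refine ⟨c, hcinj, fun j => ?_, ?_⟩
  · have := hcmem j
    by_cases hj : j = i
    · subst hj; simp [ht] at this; exact this ▸ hx
    · simp [ht, hj] at this; exact this.2
  · have := hcmem i
    simp [ht] at this
    exact this

/-- Main list lemma: any non-colorable (k+p-1)-assignment of the join is constant. -/
lemma key_list [Fintype V] (G : SimpleGraph V) (k p : ℕ) (hk : 2 ≤ k) (h : StrongCC G k)
    (hp : 1 ≤ p) (hnt : Nontrivial V)
    (L : V ⊕ Fin p → Finset ℕ) (hL : ∀ v, (L v).card = k + p - 1)
    (hnc : ¬ ListColorable (joinK G p) L) : ∀ a b, L a = L b := by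
  classical
  obtain ⟨v₁, v₂, hv12⟩ := hnt
  have hpS : ∀ j : Fin p, p ≤ (L (Sum.inr j)).card := by
    intro j; rw [hL]; omega
  -- the main argument, for an arbitrary SDR of the lists on the K_p side
  have main : ∀ c : Fin p → ℕ, Function.Injective c → (∀ j, c j ∈ L (Sum.inr j)) →
      (∀ v : V, Finset.image c Finset.univ ⊆ L (Sum.inl v)) ∧
      (∀ u v : V, L (Sum.inl u) \ Finset.image c Finset.univ
        = L (Sum.inl v) \ Finset.image c Finset.univ) := by
    intro c hcinj hcmem
    set C : Finset ℕ := Finset.image c Finset.univ with hC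
    have hCcard : C.card = p := by
      rw [hC, Finset.card_image_of_injective _ hcinj, Finset.card_univ, Fintype.card_fin]
    -- G is not colorable from L minus the SDR colors
    have hGnc : ¬ ListColorable G (fun v => L (Sum.inl v) \ C) := by
      rintro ⟨f, hf1, hf2⟩
      apply hnc
      refine ⟨Sum.elim f c, ?_, ?_⟩
      · rintro (v | j)
        · exact Finset.sdiff_subset (hf1 v)
        · exact hcmem j
      · rintro (a | i) (b | j) hadj
        · exact hf2 a b ((joinK_adj_inl_inl G p a b).mp hadj)
        · simp only [Sum.elim_inl, Sum.elim_inr]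
          intro hc
          have : f a ∉ C := (Finset.mem_sdiff.mp (hf1 a)).2
          exact this (hc ▸ Finset.mem_image_of_mem c (Finset.mem_univ j))
        · simp only [Sum.elim_inl, Sum.elim_inr]
          intro hc
          have : f b ∉ C := (Finset.mem_sdiff.mp (hf1 b)).2
          exact this (hc.symm ▸ Finset.mem_image_of_mem c (Finset.mem_univ i))
        · exact fun hc => ((joinK_adj_inr_inr G p i j).mp hadj) (hcinj hc)
    have hcard1 : ∀ v : V, k - 1 ≤ (L (Sum.inl v) \ C).card := by
      intro v
      have := Finset.le_card_sdiff C (L (Sum.inl v))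
      rw [hL, hCcard] at this
      omega
    have hcardeq : ∀ v : V, (L (Sum.inl v) \ C).card = k - 1 := by
      by_contra hcon
      push_neg at hcon
      obtain ⟨v₀, hv₀⟩ := hcon
      have hge : k ≤ (L (Sum.inl v₀) \ C).card := by
        have := hcard1 v₀; omega
      exact hGnc (lemmaA G k hk h ⟨v₁, v₂, hv12⟩ _ hcard1 v₀ hge)
    have hconst := h.2 _ hcardeq hGnc
    have hsub : ∀ v : V, C ⊆ L (Sum.inl v) := by
      intro v
      have h1 := Finset.card_inter_add_card_sdiff (L (Sum.inl v)) C
      rw [hL, hcardeq v] at h1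
      have h2 : (L (Sum.inl v) ∩ C).card = p := by omega
      have h3 : L (Sum.inl v) ∩ C = C :=
        Finset.eq_of_subset_of_card_le Finset.inter_subset_right (by omega)
      exact h3 ▸ Finset.inter_subset_left
    exact ⟨hsub, hconst⟩
  -- base SDR
  have hx₁ : (L (Sum.inr ⟨0, hp⟩)).Nonempty := by
    rw [← Finset.card_pos, hL]; omega
  obtain ⟨x₀, hx₀⟩ := hx₁
  obtain ⟨c₀, hc₀inj, hc₀mem, -⟩ := sdr _ hpS ⟨0, hp⟩ x₀ hx₀
  obtain ⟨hsub₀, hconst₀⟩ := main c₀ hc₀inj hc₀mem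
  have hVeq : ∀ v : V, L (Sum.inl v) = L (Sum.inl v₁) := by
    intro v
    have h1 := hconst₀ v v₁
    rw [← Finset.sdiff_union_of_subset (hsub₀ v), ← Finset.sdiff_union_of_subset (hsub₀ v₁), h1]
  have hWeq : ∀ i : Fin p, L (Sum.inr i) = L (Sum.inl v₁) := by
    intro i
    have hsubW : L (Sum.inr i) ⊆ L (Sum.inl v₁) := by
      intro x hx
      obtain ⟨c, hcinj, hcmem, hci⟩ := sdr _ hpS i x hx
      exact (main c hcinj hcmem).1 v₁ (hci ▸ Finset.mem_image_of_mem c (Finset.mem_univ i))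
    exact Finset.eq_of_subset_of_card_le hsubW (by rw [hL, hL])
  have hall : ∀ a, L a = L (Sum.inl v₁) := by
    rintro (v | i)
    · exact hVeq v
    · exact hWeq i
  intro a b
  rw [hall a, hall b]

end StmtNineAux

/-- joining with a large enough complete graph restores the edge condition. -/
theorem stmt_9 {V : Type*} [Fintype V] (G : SimpleGraph V) [Fintype G.edgeSet]
    (k n m : ℕ) (hk : 2 ≤ k) (h : StrongCC G k)
    (hn : Fintype.card V = n) (hm : G.edgeFinset.card = m)
    (hviol : n * (k - 2) < m) (d : ℕ) (hd : d = m - n * (k - 2))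
    (p : ℕ) (hp : 1 ≤ p) (hdp : 2 * d ≤ p * (2 * k + p - 3)) :
    StrongCC (joinK G p) (k + p) ∧
      m + p * (p - 1) / 2 + n * p ≤ (n + p) * (k + p - 2) :=  by
  classical
  -- G has an edge, hence V is nontrivial
  have hGcol1 : ¬ G.chromaticNumber ≤ (1 : ℕ) := by
    rw [h.1]
    intro hc
    rw [Nat.cast_le] at hc
    omega
  have hedge : ∃ u v, G.Adj u v := by
    by_contra hno
    push_neg at hno
    apply hGcol1
    rw [← Nat.cast_one, SimpleGraph.chromaticNumber_le_iff_colorable]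
    exact ⟨SimpleGraph.Coloring.mk (fun _ => (0 : Fin 1)) (fun hadj => absurd hadj (hno _ _))⟩
  obtain ⟨u, v, huv⟩ := hedge
  have hnt : Nontrivial V := ⟨u, v, huv.ne⟩
  constructor
  · constructor
    · exact chromatic_joinK G k p h.1
    · intro L hL hnc
      have hL' : ∀ a, (L a).card = k + p - 1 := by
        intro a; rw [hL a]
      exact key_list G k p hk h hp hnt L hL' hnc
  · -- arithmetic
    obtain ⟨a, rfl⟩ : ∃ a, k = a + 2 := ⟨k - 2, by omega⟩
    obtain ⟨q, rfl⟩ : ∃ q, p = q + 1 := ⟨p - 1, by omega⟩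
    have hma : m = n * a + d := by
      have h1 : n * (a + 2 - 2) = n * a := by norm_num
      rw [h1] at hviol hd
      rw [hd, Nat.add_sub_cancel' hviol.le]
    have hdp' : 2 * d ≤ (q + 1) * (2 * a + q + 2) := by
      have h1 : 2 * (a + 2) + (q + 1) - 3 = 2 * a + q + 2 := by omega
      rwa [h1] at hdp
    have heven : Even ((q + 1) * ((q + 1) - 1)) := by
      simpa [mul_comm] using Nat.even_mul_succ_self q
    obtain ⟨e, he⟩ := heven
    have hdiv : (q + 1) * ((q + 1) - 1) / 2 = e := by omega
    have hgoal : n * a + d + e + n * (q + 1) ≤ (n + (q + 1)) * (a + 2 + (q + 1) - 2) := by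
      have h2 : a + 2 + (q + 1) - 2 = a + q + 1 := by omega
      rw [h2]
      have he' : (q + 1) * q = e + e := by simpa using he
      nlinarith [he', hdp']
    calc m + (q + 1) * ((q + 1) - 1) / 2 + n * (q + 1)
        = n * a + d + e + n * (q + 1) := by rw [hma, hdiv]
      _ ≤ _ := hgoal
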